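/- Under the grounded Laplacian setup, fix followers i, j ∈ F and define f(x,y) = 𝟏ᵀ(L_F + x E_ii + y E_jj)^{-1}(b + x e_i + y e_j) for x, y ≥ 0. Then f is monotone nondecreasing in each variable: for all 0 ≤ x₁ ≤ x₂ and y ≥ 0, f(x₁, y) ≤ f(x₂, y). -/

import Mathlib

open Matrix Finset

lemma vmv_mulVec {n : Type} [Fintype n] (u w : n → ℝ) :
    (vecMulVec u u : Matrix n n ℝ) *ᵥ w = (u ⬝ᵥ w) • u := by
  ext p
  simp only [vecMulVec, mulVec, dotProduct, of_apply, Pi.smul_apply, smul_eq_mul,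
    Finset.sum_mul]
  exact Finset.sum_congr rfl fun r _ => by ring

lemma psd_aux {n : Type} [Fintype n] (u : n → ℝ) {x : ℝ} (hx : 0 ≤ x) :
    (x • vecMulVec u u : Matrix n n ℝ).PosSemidef := by
  rw [posSemidef_iff_dotProduct_mulVec]
  constructor
  · ext p q
    simp [vecMulVec_apply, conjTranspose_apply, mul_comm]
  · intro w
    rw [smul_mulVec, vmv_mulVec]
    simp only [star_trivial, dotProduct_smul, smul_eq_mul, dotProduct_smul]
    have h2 : w ⬝ᵥ u = u ⬝ᵥ w := dotProduct_comm _ _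
    rw [h2]
    exact mul_nonneg hx (mul_self_nonneg _)

lemma mulVec_inv_col {n : Type} [Fintype n] [DecidableEq n] (A : Matrix n n ℝ)
    (hA : IsUnit A.det) (q : n) : A *ᵥ (fun r => A⁻¹ r q) = Pi.single q 1 := by
  have h : A * A⁻¹ = 1 := Matrix.mul_nonsing_inv A hA
  ext r
  have := congrFun (congrFun h r) q
  simp only [Matrix.mul_apply] at this
  simp only [mulVec, dotProduct]
  rw [this, Matrix.one_apply]
  by_cases hrq : r = q <;> simp [hrq, Pi.single_apply]

lemma zinv_aux {n : Type} [Fintype n] [DecidableEq n] (A : Matrix n n ℝ)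
    (hA : A.PosDef) (hZ : ∀ p q, p ≠ q → A p q ≤ 0) (p q : n) : 0 ≤ A⁻¹ p q := by
  have hdet : IsUnit A.det := isUnit_iff_ne_zero.mpr hA.det_pos.ne'
  set z : n → ℝ := fun r => A⁻¹ r q with hzdef
  have hAz : A *ᵥ z = Pi.single q 1 := mulVec_inv_col A hdet q
  set w : n → ℝ := fun r => max (-(z r)) 0 with hwdef
  have hw0 : w = 0 := by
    by_contra hw
    have hpos : 0 < w ⬝ᵥ (A *ᵥ w) := by
      have := hA.dotProduct_mulVec_pos hw
      simpa using this
    have hvec : w = (fun r => max (z r) 0) - z := by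
      ext r
      simp only [Pi.sub_apply, hwdef]
      rcases le_total 0 (z r) with h | h
      · rw [max_eq_right (neg_nonpos.mpr h), max_eq_left h]; ring
      · rw [max_eq_left (neg_nonneg.mpr h), max_eq_right h]; ring
    have hzp : A *ᵥ w = A *ᵥ (fun r => max (z r) 0) - A *ᵥ z := by
      rw [hvec, Matrix.mulVec_sub]
    have hle : w ⬝ᵥ (A *ᵥ w) ≤ 0 := by
      rw [hzp, dotProduct_sub, hAz]
      have h1 : w ⬝ᵥ (A *ᵥ fun r => max (z r) 0) ≤ 0 := by
        simp only [dotProduct, mulVec]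
        apply Finset.sum_nonpos
        intro r _
        rw [Finset.mul_sum]
        apply Finset.sum_nonpos
        intro s _
        by_cases hrs : r = s
        · subst hrs
          have : w r * (A r r * max (z r) 0) = A r r * (w r * max (z r) 0) := by ring
          rw [this]
          have hzero : w r * max (z r) 0 = 0 := by
            rcases le_total 0 (z r) with h | h
            · rw [hwdef]; simp only
              rw [max_eq_right (neg_nonpos.mpr h)]; ring
            · rw [max_eq_right h]; ring
          rw [hzero, mul_zero]
        · have hA' := hZ r s hrs
          have hwr : 0 ≤ w r := le_max_right _ _
          have hzs : 0 ≤ max (z s) 0 := le_max_right _ _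
          have : w r * (A r s * max (z s) 0) = A r s * (w r * max (z s) 0) := by ring
          rw [this]
          exact mul_nonpos_of_nonpos_of_nonneg hA' (mul_nonneg hwr hzs)
      have h2 : 0 ≤ w ⬝ᵥ (Pi.single q 1 : n → ℝ) := by
        apply Finset.sum_nonneg
        intro r _
        have hwr : (0:ℝ) ≤ w r := le_max_right _ _
        have hsr : (0:ℝ) ≤ (Pi.single q 1 : n → ℝ) r := by
          rcases eq_or_ne r q with h | h <;> simp [h, Pi.single_apply]
        exact mul_nonneg hwr hsr
      linarith
    linarith
  have hwp : max (-(z p)) 0 = 0 := congrFun hw0 p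
  have hle := le_max_left (-(z p)) 0
  rw [hwp] at hle
  simpa [hzdef] using hle

theorem stmt7 {V : Type} [Fintype V] [DecidableEq V]
    (G : SimpleGraph V) [DecidableRel G.Adj] (hconn : G.Connected)
    (F S0 S1 : Finset V)
    (hFne : F.Nonempty) (hS1ne : S1.Nonempty)
    (hFS0 : Disjoint F S0) (hFS1 : Disjoint F S1) (hS0S1 : Disjoint S0 S1)
    (hcover : F ∪ S0 ∪ S1 = Finset.univ)
    (LF : Matrix F F ℝ)
    (hLF : LF = (G.lapMatrix ℝ).submatrix (fun i : F => (i : V)) (fun i : F => (i : V)))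
    (hPD : LF.PosDef) (hnn : ∀ i j : F, 0 ≤ LF⁻¹ i j)
    (b : F → ℝ)
    (hb : ∀ i : F, b i = ((S1.filter fun a => G.Adj a (i : V)).card : ℝ))
    (i j : F)
    (f : ℝ → ℝ → ℝ)
    (hf : ∀ x y : ℝ, f x y = (1 : F → ℝ) ⬝ᵥ
        ((LF + x • vecMulVec (Pi.single i 1) (Pi.single i 1)
            + y • vecMulVec (Pi.single j 1) (Pi.single j 1))⁻¹
          *ᵥ (b + x • (Pi.single i 1 : F → ℝ) + y • (Pi.single j 1 : F → ℝ))))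
    (x₁ x₂ y : ℝ) (hx₁ : 0 ≤ x₁) (hx : x₁ ≤ x₂) (hy : 0 ≤ y) :
    f x₁ y ≤ f x₂ y := by
  have hx₂ : 0 ≤ x₂ := le_trans hx₁ hx
  -- Z-property of LF
  have hzLF : ∀ p q : F, p ≠ q → LF p q ≤ 0 := by
    intro p q hpq
    have hne : (p:V) ≠ (q:V) := fun h => hpq (Subtype.ext h)
    rw [hLF]
    simp only [submatrix_apply, SimpleGraph.lapMatrix, SimpleGraph.degMatrix,
      Matrix.sub_apply, Matrix.diagonal_apply_ne _ hne]
    simp only [SimpleGraph.adjMatrix_apply]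
    by_cases hadj : G.Adj (p:V) (q:V) <;> simp [hadj]
  -- row sums of LF dominate b
  have hrow : ∀ k : F, b k ≤ ∑ l : F, LF k l := by
    intro k
    have hsub : ∑ l : F, LF k l = ∑ v ∈ F, G.lapMatrix ℝ (k:V) v := by
      rw [hLF]
      simp only [submatrix_apply]
      exact (Finset.sum_subtype F (fun x => Iff.rfl) (fun v => G.lapMatrix ℝ (k:V) v)).symm
    have htot : ∑ v : V, G.lapMatrix ℝ (k:V) v = 0 := by
      have h0 := congrFun (G.lapMatrix_mulVec_const_eq_zero (R := ℝ)) (k:V)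
      simpa [mulVec, dotProduct] using h0
    have hsplit : ∑ v ∈ F, G.lapMatrix ℝ (k:V) v + ∑ v ∈ Fᶜ, G.lapMatrix ℝ (k:V) v
        = ∑ v : V, G.lapMatrix ℝ (k:V) v := Finset.sum_add_sum_compl F _
    have hcomp : ∑ v ∈ Fᶜ, G.lapMatrix ℝ (k:V) v
        = -∑ v ∈ Fᶜ, (if G.Adj (k:V) v then (1:ℝ) else 0) := by
      rw [← Finset.sum_neg_distrib]
      apply Finset.sum_congr rfl
      intro v hv
      have hvk : (k:V) ≠ v := by
        intro h
        rw [Finset.mem_compl] at hv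
        exact hv (h ▸ k.2)
      simp [SimpleGraph.lapMatrix, SimpleGraph.degMatrix, Matrix.sub_apply,
        Matrix.diagonal_apply_ne _ hvk, SimpleGraph.adjMatrix_apply]
    have hS1sub : S1 ⊆ Fᶜ := by
      intro v hv
      rw [Finset.mem_compl]
      exact fun hvF => (Finset.disjoint_left.mp hFS1) hvF hv
    have hbk : b k = ∑ v ∈ S1, (if G.Adj (k:V) v then (1:ℝ) else 0) := by
      rw [hb k, Finset.sum_boole]
      congr 2
      apply Finset.filter_congr
      intro v _
      exact ⟨fun h => h.symm, fun h => h.symm⟩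
    have hle : ∑ v ∈ S1, (if G.Adj (k:V) v then (1:ℝ) else 0)
        ≤ ∑ v ∈ Fᶜ, (if G.Adj (k:V) v then (1:ℝ) else 0) := by
      apply Finset.sum_le_sum_of_subset_of_nonneg hS1sub
      intro v _ _
      by_cases hadj : G.Adj (k:V) v <;> simp [hadj]
    have : ∑ v ∈ F, G.lapMatrix ℝ (k:V) v = ∑ v ∈ Fᶜ, (if G.Adj (k:V) v then (1:ℝ) else 0) := by
      have := hsplit.trans htot
      rw [hcomp] at this
      linarith
    rw [hsub, this, hbk]
    exact hle
  -- setup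
  rw [hf x₁ y, hf x₂ y]
  set M₁ := LF + x₁ • vecMulVec (Pi.single i 1) (Pi.single i 1)
      + y • vecMulVec (Pi.single j 1) (Pi.single j 1) with hM₁
  set M₂ := LF + x₂ • vecMulVec (Pi.single i 1) (Pi.single i 1)
      + y • vecMulVec (Pi.single j 1) (Pi.single j 1) with hM₂
  set c₁ := b + x₁ • (Pi.single i 1 : F → ℝ) + y • (Pi.single j 1 : F → ℝ) with hc₁
  set c₂ := b + x₂ • (Pi.single i 1 : F → ℝ) + y • (Pi.single j 1 : F → ℝ) with hc₂
  have hPD₁ : M₁.PosDef := (hPD.add_posSemidef (psd_aux _ hx₁)).add_posSemidef (psd_aux _ hy)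
  have hPD₂ : M₂.PosDef := (hPD.add_posSemidef (psd_aux _ hx₂)).add_posSemidef (psd_aux _ hy)
  have hdet₁ : IsUnit M₁.det := isUnit_iff_ne_zero.mpr hPD₁.det_pos.ne'
  have hdet₂ : IsUnit M₂.det := isUnit_iff_ne_zero.mpr hPD₂.det_pos.ne'
  have hsingle_mul : ∀ (k p q : F), p ≠ q →
      (Pi.single k 1 : F → ℝ) p * (Pi.single k 1 : F → ℝ) q = (0:ℝ) := by
    intro k p q hpq
    rcases eq_or_ne p k with h | h
    · have hq : q ≠ k := fun hq => hpq (by rw [h, hq])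
      simp [Pi.single_apply, hq]
    · simp [Pi.single_apply, h]
  have hZ1 : ∀ p q : F, p ≠ q → M₁ p q ≤ 0 := by
    intro p q hpq
    rw [hM₁]
    simp only [Matrix.add_apply, Matrix.smul_apply, vecMulVec_apply, smul_eq_mul,
      hsingle_mul i p q hpq, hsingle_mul j p q hpq, mul_zero, add_zero]
    exact hzLF p q hpq
  have hZ2 : ∀ p q : F, p ≠ q → M₂ p q ≤ 0 := by
    intro p q hpq
    rw [hM₂]
    simp only [Matrix.add_apply, Matrix.smul_apply, vecMulVec_apply, smul_eq_mul,
      hsingle_mul i p q hpq, hsingle_mul j p q hpq, mul_zero, add_zero]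
    exact hzLF p q hpq
  have hinv₁ : ∀ p q : F, 0 ≤ M₁⁻¹ p q := zinv_aux M₁ hPD₁ hZ1
  have hinv₂ : ∀ p q : F, 0 ≤ M₂⁻¹ p q := zinv_aux M₂ hPD₂ hZ2
  set z₁ := M₁⁻¹ *ᵥ c₁ with hz₁
  set z₂ := M₂⁻¹ *ᵥ c₂ with hz₂
  have hMz₁ : M₁ *ᵥ z₁ = c₁ := by
    rw [hz₁, mulVec_mulVec, Matrix.mul_nonsing_inv _ hdet₁, one_mulVec]
  have hMz₂ : M₂ *ᵥ z₂ = c₂ := by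
    rw [hz₂, mulVec_mulVec, Matrix.mul_nonsing_inv _ hdet₂, one_mulVec]
  -- z₂ ≤ 1 entrywise
  have hone : z₂ i ≤ 1 := by
    have hd : ∀ k : F, 0 ≤ (M₂ *ᵥ (1 : F → ℝ) - c₂) k := by
      intro k
      have hE1 : (vecMulVec (Pi.single i 1) (Pi.single i 1) : Matrix F F ℝ) *ᵥ (1 : F → ℝ)
          = Pi.single i 1 := by
        rw [vmv_mulVec]
        have : (Pi.single i (1:ℝ)) ⬝ᵥ (1 : F → ℝ) = 1 := by
          simp [dotProduct, Pi.single_apply]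
        rw [this, one_smul]
      have hE2 : (vecMulVec (Pi.single j 1) (Pi.single j 1) : Matrix F F ℝ) *ᵥ (1 : F → ℝ)
          = Pi.single j 1 := by
        rw [vmv_mulVec]
        have : (Pi.single j (1:ℝ)) ⬝ᵥ (1 : F → ℝ) = 1 := by
          simp [dotProduct, Pi.single_apply]
        rw [this, one_smul]
      have hM2one : M₂ *ᵥ (1 : F → ℝ)
          = LF *ᵥ (1 : F → ℝ) + x₂ • (Pi.single i 1 : F → ℝ) + y • (Pi.single j 1 : F → ℝ) := by
        rw [hM₂, Matrix.add_mulVec, Matrix.add_mulVec, smul_mulVec, smul_mulVec,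
          hE1, hE2]
      have hLF1 : (LF *ᵥ (1 : F → ℝ)) k = ∑ l : F, LF k l := by
        simp [mulVec, dotProduct]
      rw [hM2one, hc₂]
      simp only [Pi.sub_apply, Pi.add_apply, Pi.smul_apply, smul_eq_mul]
      rw [hLF1]
      have := hrow k
      linarith
    have hsub : (1 : F → ℝ) - z₂ = M₂⁻¹ *ᵥ (M₂ *ᵥ (1 : F → ℝ) - c₂) := by
      rw [Matrix.mulVec_sub, mulVec_mulVec, Matrix.nonsing_inv_mul _ hdet₂, one_mulVec, hz₂]
    have : 0 ≤ ((1 : F → ℝ) - z₂) i := by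
      rw [hsub]
      simp only [mulVec, dotProduct]
      apply Finset.sum_nonneg
      intro l _
      exact mul_nonneg (hinv₂ i l) (hd l)
    simpa using this
  -- key identity
  have hM21 : M₁ *ᵥ z₂ = c₂ - ((x₂ - x₁) * z₂ i) • (Pi.single i 1 : F → ℝ) := by
    have hMrel : M₁ = M₂ - (x₂ - x₁) • vecMulVec (Pi.single i 1) (Pi.single i 1) := by
      rw [hM₁, hM₂]
      ext p q
      simp only [Matrix.sub_apply, Matrix.add_apply, Matrix.smul_apply, smul_eq_mul]
      ring
    rw [hMrel, Matrix.sub_mulVec, hMz₂, smul_mulVec, vmv_mulVec]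
    have hdot : (Pi.single i (1:ℝ)) ⬝ᵥ z₂ = z₂ i := by
      simp [dotProduct, Pi.single_apply]
    rw [hdot, smul_smul]
  have hkey : z₂ - z₁ = ((x₂ - x₁) * (1 - z₂ i)) • (M₁⁻¹ *ᵥ (Pi.single i 1 : F → ℝ)) := by
    have h1 : M₁ *ᵥ (z₂ - z₁) = ((x₂ - x₁) * (1 - z₂ i)) • (Pi.single i 1 : F → ℝ) := by
      rw [Matrix.mulVec_sub, hMz₁, hM21, hc₁, hc₂]
      ext k
      simp only [Pi.sub_apply, Pi.add_apply, Pi.smul_apply, smul_eq_mul]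
      ring
    calc z₂ - z₁ = M₁⁻¹ *ᵥ (M₁ *ᵥ (z₂ - z₁)) := by
          rw [mulVec_mulVec, Matrix.nonsing_inv_mul _ hdet₁, one_mulVec]
      _ = ((x₂ - x₁) * (1 - z₂ i)) • (M₁⁻¹ *ᵥ (Pi.single i 1 : F → ℝ)) := by
          rw [h1, Matrix.mulVec_smul]
  -- conclude
  have hdiff : (1 : F → ℝ) ⬝ᵥ z₂ - (1 : F → ℝ) ⬝ᵥ z₁
      = ((x₂ - x₁) * (1 - z₂ i)) * ((1 : F → ℝ) ⬝ᵥ (M₁⁻¹ *ᵥ (Pi.single i 1 : F → ℝ))) := by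
    rw [← dotProduct_sub, hkey, dotProduct_smul, smul_eq_mul]
  have hsum : 0 ≤ (1 : F → ℝ) ⬝ᵥ (M₁⁻¹ *ᵥ (Pi.single i 1 : F → ℝ)) := by
    simp only [dotProduct, mulVec, Pi.one_apply, one_mul]
    apply Finset.sum_nonneg
    intro p _
    apply Finset.sum_nonneg
    intro q _
    have : (0:ℝ) ≤ (Pi.single i 1 : F → ℝ) q := by
      rcases eq_or_ne q i with h | h <;> simp [h, Pi.single_apply]
    exact mul_nonneg (hinv₁ p q) this
  have hfac : 0 ≤ (x₂ - x₁) * (1 - z₂ i) := mul_nonneg (by linarith) (by linarith)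
  nlinarith [mul_nonneg hfac hsum]
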